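/- Let ⦀·⦀ be any norm on ℝ^d with dual unit sphere S⋆ = {y : ⦀y⦀⋆ = 1}. For every k ∈ {1,…,d}, the unit ball of the generalized k-support norm (the dual norm of the generalized top-k norm) equals the closed convex hull of the union, over subsets K ⊆ {1,…,d} with |K| ≤ k, of the sets π_K(S⋆). -/

import Mathlib

open Finset Set

set_option linter.unusedSectionVars false
set_option linter.unusedVariables false

namespace OSMPaper

variable {d : ℕ}

/-- Standard inner product on `ℝ^d = Fin d → ℝ`. -/
def dot (x y : Fin d → ℝ) : ℝ := ∑ i, x i * y i

/-- `N` is a norm on `ℝ^d`. -/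
def IsNorm (N : (Fin d → ℝ) → ℝ) : Prop :=
  (∀ x, 0 ≤ N x) ∧ (∀ x, N x = 0 ↔ x = 0) ∧
  (∀ (c : ℝ) (x : Fin d → ℝ), N (c • x) = |c| * N x) ∧
  (∀ x y, N (x + y) ≤ N x + N y)

/-- `proj K x = x_K`, the vector coinciding with `x` on `K` and zero outside `K`. -/
def proj (K : Finset (Fin d)) (x : Fin d → ℝ) : Fin d → ℝ :=
  fun i => if i ∈ K then x i else 0

/-- The coordinate subspace `ℝ_K`. -/
def coordSubspace (K : Finset (Fin d)) : Set (Fin d → ℝ) :=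
  {x | ∀ j, j ∉ K → x j = 0}

/-- Orthant-monotonic norm. -/
def OrthantMonotonic (N : (Fin d → ℝ) → ℝ) : Prop :=
  ∀ x x' : Fin d → ℝ, (∀ i, |x i| ≤ |x' i|) → (∀ i, 0 ≤ x i * x' i) → N x ≤ N x'

/-- Orthant-strictly monotonic norm. -/
def OrthantStrictlyMonotonic (N : (Fin d → ℝ) → ℝ) : Prop :=
  ∀ x x' : Fin d → ℝ, (∀ i, |x i| ≤ |x' i|) → (∃ j, |x j| < |x' j|) →
    (∀ i, 0 ≤ x i * x' i) → N x < N x'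

/-- Dual norm `⦀y⦀⋆ = sup_{N x ≤ 1} ⟨x, y⟩`. -/
noncomputable def dualNorm (N : (Fin d → ℝ) → ℝ) (y : Fin d → ℝ) : ℝ :=
  sSup {r | ∃ x, N x ≤ 1 ∧ r = dot x y}

/-- Support function of a set `S`. -/
noncomputable def suppFn (S : Set (Fin d → ℝ)) (y : Fin d → ℝ) : ℝ :=
  sSup {r | ∃ x ∈ S, r = dot x y}

/-- Generalized top-`k` norm associated with the source norm `N`. -/
noncomputable def topNorm (N : (Fin d → ℝ) → ℝ) (k : ℕ) (x : Fin d → ℝ) : ℝ :=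
  sSup {r | ∃ K : Finset (Fin d), K.card ≤ k ∧ r = N (proj K x)}

/-- Generalized `k`-support norm: the dual norm of the generalized top-`k` norm. -/
noncomputable def supportNorm (N : (Fin d → ℝ) → ℝ) (k : ℕ) : (Fin d → ℝ) → ℝ :=
  dualNorm (topNorm N k)

/-- The ℓ0 pseudonorm: the number of nonzero components. -/
noncomputable def l0 (x : Fin d → ℝ) : ℕ := Set.ncard {i | x i ≠ 0}

/-- `x` is an extreme point of the convex set `C`. -/
def ExtremePt (C : Set (Fin d → ℝ)) (x : Fin d → ℝ) : Prop :=
  x ∈ C ∧ ∀ y ∈ C, ∀ z ∈ C, ∀ t : ℝ, 0 < t → t < 1 →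
    x = t • y + (1 - t) • z → y = x ∧ z = x

/-! ### dot lemmas -/

lemma dot_zero_left (y : Fin d → ℝ) : dot 0 y = 0 := by simp [dot]

lemma dot_smul_left (c : ℝ) (x y : Fin d → ℝ) : dot (c • x) y = c * dot x y := by
  simp [dot, Finset.mul_sum, mul_assoc]

lemma dot_smul_right (c : ℝ) (x y : Fin d → ℝ) : dot x (c • y) = c * dot x y := by
  unfold dot
  rw [Finset.mul_sum]
  refine Finset.sum_congr rfl fun i _ => ?_
  simp [Pi.smul_apply, smul_eq_mul]; ring

lemma dot_comm (x y : Fin d → ℝ) : dot x y = dot y x := by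
  unfold dot
  exact Finset.sum_congr rfl fun i _ => mul_comm _ _

lemma dot_add_right (x y z : Fin d → ℝ) : dot x (y + z) = dot x y + dot x z := by
  simp [dot, mul_add, Finset.sum_add_distrib]

lemma dot_proj_right (K : Finset (Fin d)) (x y : Fin d → ℝ) :
    dot x (proj K y) = dot (proj K x) y := by
  unfold dot proj
  refine Finset.sum_congr rfl fun i _ => ?_
  by_cases h : i ∈ K <;> simp [h]

lemma dot_le_of_abs_le {x y : Fin d → ℝ} {M : ℝ} (h : ∀ i, |x i| ≤ M) :
    dot x y ≤ M * ∑ i, |y i| := by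
  calc dot x y ≤ ∑ i, |x i| * |y i| := by
        refine Finset.sum_le_sum fun i _ => ?_
        calc x i * y i ≤ |x i * y i| := le_abs_self _
          _ = |x i| * |y i| := abs_mul _ _
    _ ≤ ∑ i, M * |y i| :=
        Finset.sum_le_sum fun i _ => mul_le_mul_of_nonneg_right (h i) (abs_nonneg _)
    _ = M * ∑ i, |y i| := by rw [Finset.mul_sum]

lemma eq_sum_single (x : Fin d → ℝ) : x = ∑ i, Pi.single i (x i) := by
  funext j
  rw [Finset.sum_apply]
  simp [Pi.single_apply]

lemma single_eq_smul (i : Fin d) (c : ℝ) :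
    (Pi.single i c : Fin d → ℝ) = c • (Pi.single i (1:ℝ) : Fin d → ℝ) := by
  funext j
  by_cases h : j = i <;> simp [Pi.single_apply, h]

/-! ### basic norm lemmas -/

section N
variable {N : (Fin d → ℝ) → ℝ} (hN : IsNorm N)
include hN

lemma N_zero : N 0 = 0 := (hN.2.1 0).2 rfl

lemma N_sub_symm (x y : Fin d → ℝ) : N (x - y) = N (y - x) := by
  have := hN.2.2.1 (-1) (y - x)
  simpa [neg_sub] using this

lemma N_upper (x : Fin d → ℝ) : N x ≤ (∑ i, N (Pi.single i 1)) * ‖x‖ := by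
  calc N x = N (∑ i, Pi.single i (x i)) := by rw [← eq_sum_single]
    _ ≤ ∑ i, N (Pi.single i (x i)) :=
        Finset.le_sum_of_subadditive N (N_zero hN).le hN.2.2.2 _ _
    _ ≤ ∑ i, N (Pi.single i 1) * ‖x‖ := by
        refine Finset.sum_le_sum fun i _ => ?_
        rw [single_eq_smul, hN.2.2.1, mul_comm (N (Pi.single i 1)) ‖x‖]
        exact mul_le_mul_of_nonneg_right (by simpa using norm_le_pi_norm x i) (hN.1 _)
    _ = (∑ i, N (Pi.single i 1)) * ‖x‖ := by rw [Finset.sum_mul]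

lemma N_continuous : Continuous N := by
  set C : ℝ := ∑ i, N (Pi.single i 1) with hC
  have hC0 : 0 ≤ C := Finset.sum_nonneg fun i _ => hN.1 _
  have key : ∀ x y : Fin d → ℝ, |N x - N y| ≤ C * ‖x - y‖ := by
    intro x y
    rw [abs_sub_le_iff]
    constructor
    · have h1 : N x ≤ N (x - y) + N y := by
        have := hN.2.2.2 (x - y) y
        simpa using this
      have := N_upper hN (x - y)
      linarith
    · have h1 : N y ≤ N (y - x) + N x := by
        have := hN.2.2.2 (y - x) x
        simpa using this
      have h2 := N_upper hN (y - x)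
      have h3 : ‖y - x‖ = ‖x - y‖ := norm_sub_rev _ _
      rw [h3] at h2
      linarith
  have : LipschitzWith (Real.toNNReal C) N := by
    refine LipschitzWith.of_dist_le_mul fun x y => ?_
    rw [Real.dist_eq, dist_eq_norm]
    calc |N x - N y| ≤ C * ‖x - y‖ := key x y
      _ ≤ (Real.toNNReal C) * ‖x - y‖ :=
          mul_le_mul_of_nonneg_right (le_of_eq (Real.coe_toNNReal C hC0).symm) (norm_nonneg _)
  exact this.continuous

lemma N_lower (hd : 0 < d) : ∃ c > 0, ∀ x, c * ‖x‖ ≤ N x := by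
  have hne : (Metric.sphere (0 : Fin d → ℝ) 1).Nonempty := by
    refine ⟨Pi.single ⟨0, hd⟩ 1, ?_⟩
    simp [mem_sphere_iff_norm, Pi.norm_single]
  obtain ⟨z, hz, hzmin⟩ :=
    (isCompact_sphere (0 : Fin d → ℝ) 1).exists_isMinOn hne (N_continuous hN).continuousOn
  have hz1 : ‖z‖ = 1 := by simpa [mem_sphere_iff_norm] using hz
  have hzne : z ≠ 0 := by
    intro h; rw [h] at hz1; simp at hz1
  have hc : 0 < N z := by
    rcases lt_or_eq_of_le (hN.1 z) with h | h
    · exact h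
    · exact absurd ((hN.2.1 z).1 h.symm) hzne
  refine ⟨N z, hc, fun x => ?_⟩
  by_cases hx : x = 0
  · simp [hx, N_zero hN]
  · have hnx : (0:ℝ) < ‖x‖ := norm_pos_iff.2 hx
    have hmem : ‖x‖⁻¹ • x ∈ Metric.sphere (0 : Fin d → ℝ) 1 := by
      simp [mem_sphere_iff_norm, norm_smul, abs_of_pos (inv_pos.2 hnx),
        inv_mul_cancel₀ hnx.ne']
    have : N z ≤ N (‖x‖⁻¹ • x) := hzmin hmem
    have h2 : N (‖x‖⁻¹ • x) = ‖x‖⁻¹ * N x := by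
      rw [hN.2.2.1]; rw [abs_of_pos (inv_pos.2 hnx)]
    rw [h2] at this
    calc N z * ‖x‖ ≤ (‖x‖⁻¹ * N x) * ‖x‖ := mul_le_mul_of_nonneg_right this (norm_nonneg _)
      _ = N x := by field_simp

end N

/-! ### dual norm lemmas -/

section Dual
variable {N : (Fin d → ℝ) → ℝ} (hN : IsNorm N) (hd : 0 < d)
include hN hd

lemma dualSet_nonempty (y : Fin d → ℝ) :
    {r | ∃ x, N x ≤ 1 ∧ r = dot x y}.Nonempty := by
  exact ⟨0, 0, by rw [N_zero hN]; norm_num, (dot_zero_left y).symm⟩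

lemma bddAbove_dualSet (y : Fin d → ℝ) :
    BddAbove {r | ∃ x, N x ≤ 1 ∧ r = dot x y} := by
  obtain ⟨c, hc0, hc⟩ := N_lower hN hd
  refine ⟨c⁻¹ * ∑ i, |y i|, fun r hr => ?_⟩
  obtain ⟨x, hx, rfl⟩ := hr
  refine dot_le_of_abs_le fun i => ?_
  have h1 : |x i| ≤ ‖x‖ := by simpa using norm_le_pi_norm x i
  have h2 : c * ‖x‖ ≤ 1 := (hc x).trans hx
  have : ‖x‖ ≤ c⁻¹ := by
    rw [← mul_le_mul_iff_right₀ hc0, mul_inv_cancel₀ hc0.ne']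
    exact h2
  exact h1.trans this

lemma dot_le_dualNorm {x : Fin d → ℝ} (y : Fin d → ℝ) (hx : N x ≤ 1) :
    dot x y ≤ dualNorm N y :=
  le_csSup (bddAbove_dualSet hN hd y) ⟨x, hx, rfl⟩

lemma dualNorm_nonneg (y : Fin d → ℝ) : 0 ≤ dualNorm N y := by
  have := dot_le_dualNorm hN hd y (x := 0) (by rw [N_zero hN]; norm_num)
  rwa [dot_zero_left] at this

lemma dualNorm_le_of_forall {y : Fin d → ℝ} {M : ℝ}
    (h : ∀ x, N x ≤ 1 → dot x y ≤ M) : dualNorm N y ≤ M := by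
  refine csSup_le (dualSet_nonempty hN hd y) ?_
  rintro r ⟨x, hx, rfl⟩
  exact h x hx

lemma dualNorm_smul_le (c : ℝ) (hc : 0 ≤ c) (y : Fin d → ℝ) :
    dualNorm N (c • y) ≤ c * dualNorm N y := by
  refine dualNorm_le_of_forall hN hd fun x hx => ?_
  rw [dot_smul_right]
  exact mul_le_mul_of_nonneg_left (dot_le_dualNorm hN hd y hx) hc

lemma dualNorm_smul {c : ℝ} (hc : 0 < c) (y : Fin d → ℝ) :
    dualNorm N (c • y) = c * dualNorm N y := by
  refine le_antisymm (dualNorm_smul_le hN hd c hc.le y) ?_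
  have h2 := dualNorm_smul_le hN hd c⁻¹ (inv_nonneg.2 hc.le) (c • y)
  rw [smul_smul, inv_mul_cancel₀ hc.ne', one_smul] at h2
  calc c * dualNorm N y ≤ c * (c⁻¹ * dualNorm N (c • y)) :=
        mul_le_mul_of_nonneg_left h2 hc.le
    _ = dualNorm N (c • y) := by field_simp

lemma dualNorm_pos {y : Fin d → ℝ} (hy : y ≠ 0) : 0 < dualNorm N y := by
  obtain ⟨i, hi⟩ : ∃ i, y i ≠ 0 := by
    by_contra h
    push_neg at h
    exact hy (funext h)
  have hsne : (Pi.single i (1:ℝ) : Fin d → ℝ) ≠ 0 := by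
    intro h
    have := congrFun h i
    simp at this
  have ha : 0 < N (Pi.single i 1) := by
    rcases lt_or_eq_of_le (hN.1 (Pi.single i 1)) with h | h
    · exact h
    · exact absurd ((hN.2.1 _).1 h.symm) hsne
  set s : ℝ := if 0 ≤ y i then 1 else -1 with hs
  set x : Fin d → ℝ := (s / N (Pi.single i 1)) • (Pi.single i (1:ℝ) : Fin d → ℝ) with hxdef
  have hNx : N x = 1 := by
    rw [hxdef, hN.2.2.1, abs_div]
    have : |s| = 1 := by rw [hs]; split_ifs <;> norm_num
    rw [this, abs_of_pos ha]
    field_simp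
  have hdot : dot x y = |y i| / N (Pi.single i 1) := by
    rw [hxdef, dot_smul_left]
    have : dot (Pi.single i 1) y = y i := by
      unfold dot
      rw [Finset.sum_eq_single i]
      · simp
      · intro j _ hj; simp [Pi.single_apply, hj]
      · simp
    rw [this, hs]
    rcases le_or_gt 0 (y i) with h | h
    · rw [if_pos h, abs_of_nonneg h]; ring
    · rw [if_neg (not_le.2 h), abs_of_neg h]; ring
  have : dot x y ≤ dualNorm N y := dot_le_dualNorm hN hd y hNx.le
  have hpos : 0 < dot x y := by
    rw [hdot]
    exact div_pos (abs_pos.2 hi) ha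
  linarith

lemma exists_dualNorm_one : ∃ y : Fin d → ℝ, dualNorm N y = 1 := by
  set y0 : Fin d → ℝ := Pi.single ⟨0, hd⟩ (1:ℝ) with hy0
  have hy0ne : y0 ≠ 0 := by
    intro h
    have := congrFun h ⟨0, hd⟩
    simp [hy0] at this
  have ht : 0 < dualNorm N y0 := dualNorm_pos hN hd hy0ne
  refine ⟨(dualNorm N y0)⁻¹ • y0, ?_⟩
  rw [dualNorm_smul hN hd (inv_pos.2 ht), inv_mul_cancel₀ ht.ne']

end Dual

/-! ### topNorm lemmas -/

section Top
variable {N : (Fin d → ℝ) → ℝ} (hN : IsNorm N) {k : ℕ}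
include hN

lemma proj_zero (K : Finset (Fin d)) : proj K (0 : Fin d → ℝ) = 0 := by
  funext i; simp [proj]

lemma proj_empty (x : Fin d → ℝ) : proj (∅ : Finset (Fin d)) x = 0 := by
  funext i; simp [proj]

omit hN in
lemma topSet_finite (x : Fin d → ℝ) :
    {r | ∃ K : Finset (Fin d), K.card ≤ k ∧ r = N (proj K x)}.Finite := by
  apply Set.Finite.subset (Set.finite_range (fun K : Finset (Fin d) => N (proj K x)))
  rintro r ⟨K, _, rfl⟩
  exact ⟨K, rfl⟩

omit hN in
lemma topSet_nonempty (x : Fin d → ℝ) :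
    {r | ∃ K : Finset (Fin d), K.card ≤ k ∧ r = N (proj K x)}.Nonempty :=
  ⟨N (proj ∅ x), ∅, by simp, rfl⟩

omit hN in
lemma N_proj_le_topNorm {K : Finset (Fin d)} (hK : K.card ≤ k) (x : Fin d → ℝ) :
    N (proj K x) ≤ topNorm N k x :=
  le_csSup (topSet_finite (N := N) (k := k) x).bddAbove ⟨K, hK, rfl⟩

omit hN in
lemma topNorm_le_of_forall {x : Fin d → ℝ} {M : ℝ}
    (h : ∀ K : Finset (Fin d), K.card ≤ k → N (proj K x) ≤ M) : topNorm N k x ≤ M := by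
  refine csSup_le (topSet_nonempty x) ?_
  rintro r ⟨K, hK, rfl⟩
  exact h K hK

lemma topNorm_zero_le_one : topNorm N k (0 : Fin d → ℝ) ≤ 1 := by
  refine topNorm_le_of_forall fun K _ => ?_
  rw [proj_zero hN, N_zero hN]
  norm_num

lemma bddAbove_supportSet (hd : 0 < d) (hk1 : 1 ≤ k) (y : Fin d → ℝ) :
    BddAbove {r | ∃ x, topNorm N k x ≤ 1 ∧ r = dot x y} := by
  obtain ⟨c, hc0, hc⟩ := N_lower hN hd
  refine ⟨c⁻¹ * ∑ i, |y i|, fun r hr => ?_⟩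
  obtain ⟨x, hx, rfl⟩ := hr
  refine dot_le_of_abs_le fun i => ?_
  have h1 : |x i| ≤ ‖proj {i} x‖ := by
    have := norm_le_pi_norm (proj {i} x) i
    simpa [proj] using this
  have h2 : N (proj {i} x) ≤ 1 := by
    refine le_trans ?_ hx
    exact N_proj_le_topNorm (by simpa using hk1) x
  have h3 : c * |x i| ≤ 1 := by
    calc c * |x i| ≤ c * ‖proj {i} x‖ := mul_le_mul_of_nonneg_left h1 hc0.le
      _ ≤ N (proj {i} x) := hc _
      _ ≤ 1 := h2
  rw [← mul_le_mul_iff_right₀ hc0, mul_inv_cancel₀ hc0.ne']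
  exact h3

lemma supportNorm_le_one_iff (hd : 0 < d) (hk1 : 1 ≤ k) (y : Fin d → ℝ) :
    supportNorm N k y ≤ 1 ↔ ∀ x, topNorm N k x ≤ 1 → dot x y ≤ 1 := by
  constructor
  · intro h x hx
    calc dot x y ≤ supportNorm N k y :=
          le_csSup (bddAbove_supportSet hN hd hk1 y) ⟨x, hx, rfl⟩
      _ ≤ 1 := h
  · intro h
    refine csSup_le ⟨0, 0, topNorm_zero_le_one hN, (dot_zero_left y).symm⟩ ?_
    rintro r ⟨x, hx, rfl⟩
    exact h x hx

end Top

/-! ### separation / biduality -/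

section Sep
variable {N : (Fin d → ℝ) → ℝ} (hN : IsNorm N) (hd : 0 < d)
include hN hd

omit hN hd in
/-- A continuous linear functional is given by `dot` with its coefficient vector. -/
lemma clm_eq_dot (f : (Fin d → ℝ) →L[ℝ] ℝ) (z : Fin d → ℝ) :
    f z = dot (fun i => f (Pi.single i 1)) z := by
  conv_lhs => rw [eq_sum_single z]
  rw [map_sum]
  unfold dot
  refine Finset.sum_congr rfl fun i _ => ?_
  rw [single_eq_smul i (z i), map_smul]
  simp [mul_comm]

lemma exists_dual_gt {w : Fin d → ℝ} (hw : 1 < N w) :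
    ∃ y : Fin d → ℝ, dualNorm N y ≤ 1 ∧ 1 < dot w y := by
  set B : Set (Fin d → ℝ) := {z | N z ≤ 1} with hB
  have hBconv : Convex ℝ B := by
    intro a ha b hb ta tb hta htb htab
    have h1 : N (ta • a + tb • b) ≤ N (ta • a) + N (tb • b) := hN.2.2.2 _ _
    rw [hN.2.2.1, hN.2.2.1, abs_of_nonneg hta, abs_of_nonneg htb] at h1
    have : ta * N a + tb * N b ≤ ta * 1 + tb * 1 := by
      exact add_le_add (mul_le_mul_of_nonneg_left ha hta) (mul_le_mul_of_nonneg_left hb htb)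
    simp only [mul_one] at this
    exact h1.trans (this.trans_eq htab)
  have hBclosed : IsClosed B := IsClosed.preimage (N_continuous hN) isClosed_Iic
  have hwB : w ∉ B := by simp [hB]; linarith
  obtain ⟨f, u, hfB, hfw⟩ := geometric_hahn_banach_closed_point hBconv hBclosed hwB
  have h0B : (0 : Fin d → ℝ) ∈ B := by simp [hB, N_zero hN]
  have hu : 0 < u := by
    have := hfB 0 h0B
    simpa using this
  set y : Fin d → ℝ := u⁻¹ • (fun i => f (Pi.single i 1)) with hy
  have hdot : ∀ z, dot z y = u⁻¹ * f z := by
    intro z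
    rw [hy, dot_smul_right, dot_comm, ← clm_eq_dot]
  refine ⟨y, ?_, ?_⟩
  · refine dualNorm_le_of_forall hN hd fun x hx => ?_
    rw [hdot]
    have := hfB x hx
    have h2 : u⁻¹ * f x ≤ u⁻¹ * u := mul_le_mul_of_nonneg_left this.le (inv_nonneg.2 hu.le)
    rwa [inv_mul_cancel₀ hu.ne'] at h2
  · rw [hdot]
    rw [← inv_mul_cancel₀ hu.ne']
    exact mul_lt_mul_of_pos_left hfw (inv_pos.2 hu)

lemma N_le_one_of_dual {w : Fin d → ℝ}
    (h : ∀ y, dualNorm N y = 1 → dot w y ≤ 1) : N w ≤ 1 := by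
  by_contra hcon
  push_neg at hcon
  obtain ⟨y, hy1, hy2⟩ := exists_dual_gt hN hd hcon
  have hyne : y ≠ 0 := by
    intro h0
    rw [h0] at hy2
    simp [dot] at hy2
    linarith
  have ht : 0 < dualNorm N y := dualNorm_pos hN hd hyne
  set t := dualNorm N y with htdef
  have h1 : dualNorm N (t⁻¹ • y) = 1 := by
    rw [dualNorm_smul hN hd (inv_pos.2 ht), inv_mul_cancel₀ ht.ne']
  have h2 := h _ h1
  rw [dot_smul_right] at h2
  have h4 : 1 ≤ t⁻¹ := by
    rw [← mul_le_mul_iff_right₀ ht, mul_inv_cancel₀ ht.ne', mul_one]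
    exact hy1
  have h5 : (1:ℝ) * dot w y ≤ t⁻¹ * dot w y :=
    mul_le_mul_of_nonneg_right h4 (by linarith)
  rw [one_mul] at h5
  linarith

end Sep

/-- the unit ball of the generalized k-support norm is the closed
convex hull of the union of the sets `π_K(S⋆)` over `|K| ≤ k`. -/
theorem supportNorm_unitBall_eq_closedConvexHull
    (hd : 0 < d) (N : (Fin d → ℝ) → ℝ) (hN : IsNorm N)
    (k : ℕ) (hk1 : 1 ≤ k) (hkd : k ≤ d) :
    {y : Fin d → ℝ | supportNorm N k y ≤ 1} =
      closure (convexHull ℝ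
        (⋃ (K : Finset (Fin d)) (_ : K.card ≤ k),
          proj K '' {y : Fin d → ℝ | dualNorm N y = 1})) := by
  set Sstar : Set (Fin d → ℝ) := {y | dualNorm N y = 1} with hSstar
  set U : Set (Fin d → ℝ) :=
    ⋃ (K : Finset (Fin d)) (_ : K.card ≤ k), proj K '' Sstar with hU
  set Ball : Set (Fin d → ℝ) := {y | supportNorm N k y ≤ 1} with hBall
  have hBall' : Ball = {y | ∀ x, topNorm N k x ≤ 1 → dot x y ≤ 1} := by
    ext y
    exact supportNorm_le_one_iff hN hd hk1 y
  -- Ball is closed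
  have hclosed : IsClosed Ball := by
    rw [hBall']
    have heq : {y : Fin d → ℝ | ∀ x, topNorm N k x ≤ 1 → dot x y ≤ 1} =
        ⋂ (x : Fin d → ℝ) (_ : topNorm N k x ≤ 1), {y | dot x y ≤ 1} := by
      ext y; simp [Set.mem_iInter]
    rw [heq]
    refine isClosed_iInter fun x => isClosed_iInter fun _ => ?_
    have hcont : Continuous fun y : Fin d → ℝ => dot x y := by
      unfold dot
      exact continuous_finset_sum _ fun i _ => continuous_const.mul (continuous_apply i)
    exact isClosed_le hcont continuous_const
  -- Ball is convex
  have hconv : Convex ℝ Ball := by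
    rw [hBall']
    intro a ha b hb ta tb hta htb htab x hx
    rw [dot_add_right, dot_smul_right, dot_smul_right]
    calc ta * dot x a + tb * dot x b ≤ ta * 1 + tb * 1 :=
          add_le_add (mul_le_mul_of_nonneg_left (ha x hx) hta)
            (mul_le_mul_of_nonneg_left (hb x hx) htb)
      _ = 1 := by rw [mul_one, mul_one, htab]
  -- U ⊆ Ball
  have hUsub : U ⊆ Ball := by
    rw [hBall']
    intro z hz
    rw [hU] at hz
    simp only [Set.mem_iUnion] at hz
    obtain ⟨K, hK, y, hy, rfl⟩ := hz
    intro x hx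
    rw [dot_proj_right]
    have h1 : N (proj K x) ≤ 1 := (N_proj_le_topNorm hK x).trans hx
    have h2 := dot_le_dualNorm hN hd y h1
    have hy1 : dualNorm N y = 1 := hy
    rw [hy1] at h2
    exact h2
  -- superset direction
  have hsup : closure (convexHull ℝ U) ⊆ Ball :=
    closure_minimal (convexHull_min hUsub hconv) hclosed
  -- subset direction
  refine Set.Subset.antisymm ?_ hsup
  intro y0 hy0
  by_contra hnot
  have hCconv : Convex ℝ (closure (convexHull ℝ U)) := (convex_convexHull ℝ U).closure
  obtain ⟨f, u, hfC, hfy⟩ :=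
    geometric_hahn_banach_closed_point hCconv isClosed_closure hnot
  have h0U : (0 : Fin d → ℝ) ∈ U := by
    obtain ⟨ys, hys⟩ := exists_dualNorm_one hN hd
    rw [hU]
    simp only [Set.mem_iUnion]
    exact ⟨∅, by simp, ys, hys, proj_empty hN ys⟩
  have h0C : (0 : Fin d → ℝ) ∈ closure (convexHull ℝ U) :=
    subset_closure (subset_convexHull ℝ U h0U)
  have hu : 0 < u := by simpa using hfC 0 h0C
  set x' : Fin d → ℝ := u⁻¹ • (fun i => f (Pi.single i 1)) with hx'
  have hdot : ∀ z, dot x' z = u⁻¹ * f z := by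
    intro z
    rw [hx', dot_smul_left, ← clm_eq_dot]
  have htop : topNorm N k x' ≤ 1 := by
    refine topNorm_le_of_forall fun K hK => ?_
    refine N_le_one_of_dual hN hd fun y hy => ?_
    rw [← dot_proj_right, hdot]
    have hmem : proj K y ∈ U := by
      rw [hU]
      simp only [Set.mem_iUnion]
      exact ⟨K, hK, y, hy, rfl⟩
    have hlt : f (proj K y) < u :=
      hfC _ (subset_closure (subset_convexHull ℝ U hmem))
    have h2 : u⁻¹ * f (proj K y) ≤ u⁻¹ * u :=
      mul_le_mul_of_nonneg_left hlt.le (inv_nonneg.2 hu.le)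
    rwa [inv_mul_cancel₀ hu.ne'] at h2
  have hle1 : dot x' y0 ≤ 1 := by
    rw [hBall'] at hy0
    exact hy0 x' htop
  have hgt1 : 1 < dot x' y0 := by
    rw [hdot, ← inv_mul_cancel₀ hu.ne']
    exact mul_lt_mul_of_pos_left hfy (inv_pos.2 hu)
  linarith


end OSMPaper
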